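/- arXiv:1905.04689 — 8 statements merged into one kernel-verified Lean document; each statement's English description precedes it below -/
import Mathlib

section
/- If the parthood relation ⊑ on S is reflexive, transitive and separative, then mereological sums and fusions coincide: for all a ∈ S and B ⊆ S, Σ a B holds if and only if 𝔉 a B holds. -/
/-- Overlap: `x` and `y` overlap iff some `z` is part of both. -/
def Overlap {α : Type*} (P : α → α → Prop) (x y : α) : Prop :=
  ∃ z, P z x ∧ P z y

/-- `a` is a mereological sum of `B`. -/
def MSum {α : Type*} (P : α → α → Prop) (a : α) (B : Set α) : Prop :=
  (∀ x ∈ B, P x a) ∧ (∀ z, P z a → ∃ x ∈ B, Overlap P z x)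

/-- `a` is a mereological fusion of `B`. -/
def MFusion {α : Type*} (P : α → α → Prop) (a : α) (B : Set α) : Prop :=
  ∀ z, Overlap P z a ↔ ∃ x ∈ B, Overlap P z x

/-- Separativity (strong supplementation). -/
def Separative {α : Type*} (P : α → α → Prop) : Prop :=
  ∀ a b, ¬ P a b → ∃ z, P z a ∧ ¬ Overlap P z b

theorem sum_iff_fusion {α : Type*} (P : α → α → Prop)
    (hrefl : ∀ x, P x x) (htrans : ∀ x y z, P x y → P y z → P x z)
    (hsep : Separative P) :
    ∀ (a : α) (B : Set α), MSum P a B ↔ MFusion P a B := by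
  intro a B
  constructor
  · rintro ⟨h1, h2⟩ z
    constructor
    · rintro ⟨w, hwz, hwa⟩
      obtain ⟨x, hxB, u, huw, hux⟩ := h2 w hwa
      exact ⟨x, hxB, u, htrans u w z huw hwz, hux⟩
    · rintro ⟨x, hxB, u, huz, hux⟩
      exact ⟨u, huz, htrans u x a hux (h1 x hxB)⟩
  · intro hf
    constructor
    · intro x hxB
      by_contra hxa
      obtain ⟨z, hzx, hno⟩ := hsep x a hxa
      exact hno ((hf z).mpr ⟨x, hxB, z, hrefl z, hzx⟩)
    · intro z hza
      exact (hf z).mp ⟨z, hrefl z, hza⟩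
end

section
/- If the parthood relation ⊑ on S is reflexive, transitive and separative, then every binary fusion is a binary sum: for all a, b, c ∈ S, if 𝔉 a {b, c} holds then Σ a {b, c} holds. -/
theorem binary_fusion_is_binary_sum {α : Type*} (P : α → α → Prop)
    (hrefl : ∀ x, P x x) (htrans : ∀ x y z, P x y → P y z → P x z)
    (hsep : Separative P) :
    ∀ a b c : α, MFusion P a {b, c} → MSum P a {b, c} := by
  intro a b c hfus
  constructor
  · intro x hx
    by_contra hnp
    obtain ⟨z, hzx, hno⟩ := hsep x a hnp
    exact hno ((hfus z).mpr ⟨x, hx, ⟨z, hrefl z, hzx⟩⟩)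
  · intro z hza
    exact (hfus z).mp ⟨z, hrefl z, hza⟩
end

section
/- The rough contact relation Ɽ_a is not transitive in general: for X = {1,2,3,4} with granulation 𝒢 = {{1,2},{3,4}}, and A = {1}, B = {2,4}, C = {3}, one has Ɽ_a A B and Ɽ_a B C but not Ɽ_a A C. -/
/-- Type-a rough contact: nonempty parts of `A` and `B` lie in a common granule. -/
def Ra {X : Type*} (G : Set (Set X)) (A B : Set X) : Prop :=
  ∃ e f : Set X, e.Nonempty ∧ f.Nonempty ∧ e ⊆ A ∧ f ⊆ B ∧ ∃ g ∈ G, e ⊆ g ∧ f ⊆ g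

theorem Ra_not_transitive :
    Ra ({{1, 2}, {3, 4}} : Set (Set ℕ)) {1} {2, 4} ∧
    Ra ({{1, 2}, {3, 4}} : Set (Set ℕ)) {2, 4} {3} ∧
    ¬ Ra ({{1, 2}, {3, 4}} : Set (Set ℕ)) {1} {3} := by
  refine ⟨⟨{1}, {2}, ⟨1, rfl⟩, ⟨2, rfl⟩, ?_, ?_, {1, 2}, Or.inl rfl, ?_, ?_⟩,
    ⟨{4}, {3}, ⟨4, rfl⟩, ⟨3, rfl⟩, ?_, ?_, {3, 4}, Or.inr rfl, ?_, ?_⟩, ?_⟩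
  · intro x hx; exact hx
  · intro x hx; simp_all
  · intro x hx; simp_all
  · intro x hx; simp_all
  · intro x hx; simp_all
  · intro x hx; simp_all
  · intro x hx; simp_all
  · intro x hx; simp_all
  rintro ⟨e, f, ⟨x, hx⟩, ⟨y, hy⟩, heA, hfC, g, hg, heg, hfg⟩
  have hx1 : x = 1 := heA hx
  have hy3 : y = 3 := hfC hy
  have hxg := heg hx
  have hyg := hfg hy
  rcases hg with rfl | rfl
  · subst hy3; simp at hyg
  · subst hx1; simp at hxg
end

section
/- If the granulation 𝒢 covers X, i.e. ⋃𝒢 = X, then the rough contact relation Ɽ_3 is reflexive on nonempty subsets: Ɽ_3 A A holds for every nonempty A ⊆ X. -/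
/-- Upper approximation: union of granules meeting `A`. -/
def upperApprox {X : Type*} (G : Set (Set X)) (A : Set X) : Set X :=
  ⋃₀ {g ∈ G | (g ∩ A).Nonempty}

/-- Type-3 rough contact. -/
def R3 {X : Type*} (G : Set (Set X)) (A B : Set X) : Prop :=
  ∃ g ∈ G, g ⊆ upperApprox G A ∧ g ⊆ upperApprox G B

theorem R3_reflexive_of_cover {X : Type*} (G : Set (Set X))
    (hG : ∀ g ∈ G, Set.Nonempty g) (hcov : ⋃₀ G = Set.univ) :
    ∀ A : Set X, A.Nonempty → R3 G A A := by
  rintro A ⟨a, ha⟩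
  have haU : a ∈ ⋃₀ G := by rw [hcov]; trivial
  obtain ⟨g, hgG, hag⟩ := haU
  have hsub : g ⊆ upperApprox G A := fun x hx =>
    ⟨g, ⟨hgG, ⟨a, hag, ha⟩⟩, hx⟩
  exact ⟨g, hgG, hsub, hsub⟩
end

section
/- If the granulation 𝒢 covers X, i.e. ⋃𝒢 = X, then Ɽ_a is a contact relation on the subsets of X: it satisfies the contact axioms C1, C2, C3, C4 and C5. -/
/-- `C` is a contact relation on subsets of `X` (axioms C1–C5). -/
def ContactRel {X : Type*} (C : Set X → Set X → Prop) : Prop :=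
  (∀ A B : Set X, C A B → A.Nonempty ∧ B.Nonempty) ∧
  (∀ A B : Set X, C A B → C B A) ∧
  (∀ A B E : Set X, C A B → B ⊆ E → C A E) ∧
  (∀ A B E : Set X, C A (B ∪ E) → C A B ∨ C A E) ∧
  (∀ A B : Set X, (A ∩ B).Nonempty → C A B)

theorem Ra_contact_of_cover {X : Type*} (G : Set (Set X))
    (hG : ∀ g ∈ G, Set.Nonempty g) (hcov : ⋃₀ G = Set.univ) :
    ContactRel (Ra G) := by
  refine ⟨?_, ?_, ?_, ?_, ?_⟩
  · rintro A B ⟨e, f, he, hf, heA, hfB, _⟩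
    exact ⟨he.mono heA, hf.mono hfB⟩
  · rintro A B ⟨e, f, he, hf, heA, hfB, g, hg, heg, hfg⟩
    exact ⟨f, e, hf, he, hfB, heA, g, hg, hfg, heg⟩
  · rintro A B E ⟨e, f, he, hf, heA, hfB, g, hg, heg, hfg⟩ hBE
    exact ⟨e, f, he, hf, heA, hfB.trans hBE, g, hg, heg, hfg⟩
  · rintro A B E ⟨e, f, he, ⟨x, hx⟩, heA, hfB, g, hg, heg, hfg⟩
    rcases hfB hx with hxB | hxE
    · exact Or.inl ⟨e, {x}, he, Set.singleton_nonempty x, heA,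
        Set.singleton_subset_iff.2 hxB, g, hg, heg,
        Set.singleton_subset_iff.2 (hfg hx)⟩
    · exact Or.inr ⟨e, {x}, he, Set.singleton_nonempty x, heA,
        Set.singleton_subset_iff.2 hxE, g, hg, heg,
        Set.singleton_subset_iff.2 (hfg hx)⟩
  · rintro A B ⟨x, hxA, hxB⟩
    have : x ∈ ⋃₀ G := by rw [hcov]; trivial
    rcases this with ⟨g, hg, hxg⟩
    exact ⟨{x}, {x}, Set.singleton_nonempty x, Set.singleton_nonempty x,
      Set.singleton_subset_iff.2 hxA, Set.singleton_subset_iff.2 hxB,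
      g, hg, Set.singleton_subset_iff.2 hxg, Set.singleton_subset_iff.2 hxg⟩
end

section
/- The rough contact relation Ɽ_o fails the contact axioms C4 and C5 even in the classical rough set context: for X = {1,2,3} with the partition granulation 𝒢 = {{1,2,3}}, and A = {1,2,3}, B = {1,2}, C = {3}, one has Ɽ_o A (B ∪ C) but neither Ɽ_o A B nor Ɽ_o A C (refuting C4), and A ∩ B ≠ ∅ while Ɽ_o A B fails (refuting C5). -/
/-- Type-o rough contact: `A` and `B` share a granule. -/
def Ro {X : Type*} (G : Set (Set X)) (A B : Set X) : Prop :=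
  ∃ g ∈ G, g ⊆ A ∧ g ⊆ B

theorem Ro_fails_C4_C5 :
    Ro ({{1, 2, 3}} : Set (Set ℕ)) {1, 2, 3} ({1, 2} ∪ {3}) ∧
    ¬ Ro ({{1, 2, 3}} : Set (Set ℕ)) {1, 2, 3} {1, 2} ∧
    ¬ Ro ({{1, 2, 3}} : Set (Set ℕ)) {1, 2, 3} {3} ∧
    (({1, 2, 3} : Set ℕ) ∩ {1, 2}).Nonempty := by
  refine ⟨⟨{1, 2, 3}, rfl, le_refl _, ?_⟩, ?_, ?_, ⟨1, by simp⟩⟩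
  · intro x hx
    simp only [Set.mem_insert_iff, Set.mem_singleton_iff] at hx
    rcases hx with h | h | h <;> simp [h]
  · rintro ⟨g, hg, -, hB⟩
    simp only [Set.mem_singleton_iff] at hg
    subst hg
    have := hB (show (3:ℕ) ∈ _ by simp)
    simp at this
  · rintro ⟨g, hg, -, hB⟩
    simp only [Set.mem_singleton_iff] at hg
    subst hg
    have := hB (show (1:ℕ) ∈ _ by simp)
    simp at this
end

section
/- The rough contact relation Ɽ_2 satisfies the contact axioms C1, C2 and C3: Ɽ_2 A B implies A ≠ ∅ and B ≠ ∅; Ɽ_2 A B implies Ɽ_2 B A; and Ɽ_2 A B together with B ⊆ E implies Ɽ_2 A E. -/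
/-- Lower approximation: union of granules included in `A`. -/
def lowerApprox {X : Type*} (G : Set (Set X)) (A : Set X) : Set X :=
  ⋃₀ {g ∈ G | g ⊆ A}

/-- Type-2 rough contact. -/
def R2 {X : Type*} (G : Set (Set X)) (A B : Set X) : Prop :=
  ∃ e ∈ G, ∃ f ∈ G, e ⊆ lowerApprox G A ∧ e ⊆ upperApprox G B ∧
    f ⊆ upperApprox G A ∧ f ⊆ lowerApprox G B

lemma lowerApprox_subset {X : Type*} (G : Set (Set X)) (A : Set X) :
    lowerApprox G A ⊆ A := by
  intro x hx
  obtain ⟨g, ⟨_, hgA⟩, hxg⟩ := hx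
  exact hgA hxg

lemma lowerApprox_mono {X : Type*} (G : Set (Set X)) {A B : Set X} (h : A ⊆ B) :
    lowerApprox G A ⊆ lowerApprox G B := by
  intro x hx
  obtain ⟨g, ⟨hgG, hgA⟩, hxg⟩ := hx
  exact ⟨g, ⟨hgG, hgA.trans h⟩, hxg⟩

lemma upperApprox_mono {X : Type*} (G : Set (Set X)) {A B : Set X} (h : A ⊆ B) :
    upperApprox G A ⊆ upperApprox G B := by
  intro x hx
  obtain ⟨g, ⟨hgG, hgA⟩, hxg⟩ := hx
  exact ⟨g, ⟨hgG, hgA.mono (Set.inter_subset_inter_right g h)⟩, hxg⟩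

theorem R2_C1_C2_C3 {X : Type*} (G : Set (Set X))
    (hG : ∀ g ∈ G, Set.Nonempty g) :
    (∀ A B : Set X, R2 G A B → A.Nonempty ∧ B.Nonempty) ∧
    (∀ A B : Set X, R2 G A B → R2 G B A) ∧
    (∀ A B E : Set X, R2 G A B → B ⊆ E → R2 G A E) := by
  refine ⟨?_, ?_, ?_⟩
  · rintro A B ⟨e, heG, f, hfG, heA, _, _, hfB⟩
    exact ⟨(hG e heG).mono (heA.trans (lowerApprox_subset G A)),
      (hG f hfG).mono (hfB.trans (lowerApprox_subset G B))⟩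
  · rintro A B ⟨e, heG, f, hfG, heA, heB, hfA, hfB⟩
    exact ⟨f, hfG, e, heG, hfB, hfA, heB, heA⟩
  · rintro A B E ⟨e, heG, f, hfG, heA, heB, hfA, hfB⟩ hBE
    exact ⟨e, heG, f, hfG, heA, heB.trans (upperApprox_mono G hBE), hfA,
      hfB.trans (lowerApprox_mono G hBE)⟩
end

section
/- The rough contact relation Ɽ_3 satisfies the contact axioms C1, C2 and C3: Ɽ_3 A B implies A ≠ ∅ and B ≠ ∅; Ɽ_3 A B implies Ɽ_3 B A; and Ɽ_3 A B together with B ⊆ E implies Ɽ_3 A E. -/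
lemma nonempty_of_upperApprox {X : Type*} {G : Set (Set X)} {A : Set X}
    (h : (upperApprox G A).Nonempty) : A.Nonempty := by
  obtain ⟨x, g, ⟨_, y, _, hyA⟩, _⟩ := h
  exact ⟨y, hyA⟩

theorem R3_C1_C2_C3 {X : Type*} (G : Set (Set X))
    (hG : ∀ g ∈ G, Set.Nonempty g) :
    (∀ A B : Set X, R3 G A B → A.Nonempty ∧ B.Nonempty) ∧
    (∀ A B : Set X, R3 G A B → R3 G B A) ∧
    (∀ A B E : Set X, R3 G A B → B ⊆ E → R3 G A E) := by
  refine ⟨?_, ?_, ?_⟩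
  · rintro A B ⟨g, hgG, hA, hB⟩
    obtain ⟨x, hx⟩ := hG g hgG
    exact ⟨nonempty_of_upperApprox ⟨x, hA hx⟩, nonempty_of_upperApprox ⟨x, hB hx⟩⟩
  · rintro A B ⟨g, hgG, hA, hB⟩
    exact ⟨g, hgG, hB, hA⟩
  · rintro A B E ⟨g, hgG, hA, hB⟩ hBE
    exact ⟨g, hgG, hA, hB.trans (upperApprox_mono G hBE)⟩
end
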